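/- Let ζ > 0, C_ω > 0, and m, N̄, M ∈ ℕ with 1 ≤ m ≤ N̄ and M ≥ 1. Let h > 0, δ := m·h, h̄ := δ/N̄, L := M·h. For k ∈ ℤ with 1 ≤ |k| ≤ N̄ set c_k := sign(k)·(2|k| − 1)·h̄/2, and let ω_k be real numbers with ω_k ≥ C_ω·δ for all such k. Let u : ℝ → ℝ vanish outside [0, L] and be affine on each element [i·h, (i+1)·h] for 0 ≤ i < M, with slope a_i on the i-th element. Define D^h(u,u) := ∫₀^L (ζ/δ³) · ∑_{1 ≤ |k| ≤ N̄} (u(x + c_k) − u(x))² · ω_k dx. Then D^h(u,u) ≥ (ζ·C_ω/(8·N̄²)) · ∑_{i=0}^{M−1} a_i²·h; that is, D^h(u,u) ≥ c·|u|²_{H¹(0,L)} with c = ζ·C_ω/(8·N̄²) independent of h and δ. -/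

import Mathlib

open MeasureTheory Finset

/-- Every point of `[0, M·h]` lies in some element `[i·h, (i+1)·h]`, `i < M`. -/
lemma aux_mem_elt (M : ℕ) (hM : 1 ≤ M) (h : ℝ) (hh : 0 < h)
    (x : ℝ) (hx0 : 0 ≤ x) (hxL : x ≤ (M : ℝ) * h) :
    ∃ i : ℕ, i < M ∧ x ∈ Set.Icc ((i : ℝ) * h) (((i : ℝ) + 1) * h) := by
  by_cases hxe : x = (M : ℝ) * h
  · refine ⟨M - 1, Nat.sub_lt hM one_pos, ?_⟩
    have hcast : ((M - 1 : ℕ) : ℝ) = (M : ℝ) - 1 := by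
      have := Nat.cast_sub hM (R := ℝ); simpa using this
    constructor
    · rw [hcast, hxe]; nlinarith
    · rw [hcast, hxe]; nlinarith
  · have hxlt : x < (M : ℝ) * h := lt_of_le_of_ne hxL hxe
    refine ⟨⌊x / h⌋₊, ?_, ?_, ?_⟩
    · rw [Nat.floor_lt (div_nonneg hx0 hh.le)]
      exact (div_lt_iff₀ hh).2 hxlt
    · have := Nat.floor_le (div_nonneg hx0 hh.le) (R := ℝ) (a := x / h)
      calc (⌊x / h⌋₊ : ℝ) * h ≤ (x / h) * h := by nlinarith
        _ = x := by field_simp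
    · have := Nat.lt_floor_add_one (x / h)
      have : x / h * h < ((⌊x / h⌋₊ : ℝ) + 1) * h := by nlinarith
      have hx' : x < ((⌊x / h⌋₊ : ℝ) + 1) * h := by
        have hxh : x / h * h = x := by field_simp
        linarith [hxh ▸ this]
      exact hx'.le

/-- A bounded measurable function is interval integrable. -/
lemma aux_intInt {f : ℝ → ℝ} (hf : Measurable f) (B : ℝ) (hB : ∀ x, ‖f x‖ ≤ B)
    (a b : ℝ) : IntervalIntegrable f volume a b := by
  rw [intervalIntegrable_iff]
  refine Integrable.mono' (g := fun _ => B)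
    (integrableOn_const measure_Ioc_lt_top.ne)
    hf.aestronglyMeasurable.restrict ?_
  exact Filter.Eventually.of_forall fun x => hB x

set_option maxHeartbeats 1000000 in
/-- `u` as in the theorem is measurable. -/
lemma aux_umeas (M : ℕ) (h : ℝ) (hh : 0 < h) (L : ℝ) (hL : L = M * h) (hL0 : 0 < L)
    (u : ℝ → ℝ) (a : ℕ → ℝ)
    (hu0 : ∀ x : ℝ, x ∉ Set.Icc (0 : ℝ) L → u x = 0)
    (haff : ∀ i : ℕ, i < M → ∀ x ∈ Set.Icc ((i : ℝ) * h) (((i : ℝ) + 1) * h),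
      u x = u ((i : ℝ) * h) + a i * (x - (i : ℝ) * h)) :
    Measurable u := by
  have hu : u = fun x => (∑ i ∈ Finset.range M,
      Set.indicator (Set.Ico ((i : ℝ) * h) (((i : ℝ) + 1) * h))
        (fun y => u ((i : ℝ) * h) + a i * (y - (i : ℝ) * h)) x)
      + Set.indicator {L} (fun _ => u L) x := by
    funext x
    by_cases hx0 : x ∈ Set.Icc (0 : ℝ) L
    · by_cases hxL : x = L
      · subst hxL
        have hzero : ∀ i ∈ Finset.range M,
            Set.indicator (Set.Ico ((i : ℝ) * h) (((i : ℝ) + 1) * h))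
              (fun y => u ((i : ℝ) * h) + a i * (y - (i : ℝ) * h)) x = 0 := by
          intro i hi
          apply Set.indicator_of_notMem
          rw [Set.mem_Ico]
          push_neg
          intro _
          have : ((i : ℝ) + 1) * h ≤ (M : ℝ) * h := by
            have : (i : ℝ) + 1 ≤ M := by
              have := Finset.mem_range.1 hi; exact_mod_cast this
            nlinarith
          linarith [hL ▸ this]
        rw [Finset.sum_congr rfl hzero]
        simp
      · have hxlt : x < L := lt_of_le_of_ne hx0.2 hxL
        set i := ⌊x / h⌋₊ with hi_def
        have hx0' : 0 ≤ x := hx0.1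
        have hfl : (i : ℝ) ≤ x / h := Nat.floor_le (div_nonneg hx0' hh.le)
        have h1 : (i : ℝ) * h ≤ x := by
          calc (i : ℝ) * h ≤ (x / h) * h := by nlinarith
            _ = x := by field_simp
        have h2 : x < ((i : ℝ) + 1) * h := by
          have := Nat.lt_floor_add_one (x / h)
          have h' : x / h * h < ((i : ℝ) + 1) * h := by nlinarith
          have hxh : x / h * h = x := by field_simp
          linarith [hxh ▸ h']
        have hiM : i < M := by
          rw [hi_def, Nat.floor_lt (div_nonneg hx0' hh.le)]
          rw [div_lt_iff₀ hh]
          rw [hL] at hxlt; linarith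
        rw [Finset.sum_eq_single_of_mem i (Finset.mem_range.2 hiM)]
        · rw [Set.indicator_of_mem (by exact Set.mem_Ico.2 ⟨h1, h2⟩),
            Set.indicator_of_notMem (by simpa using hxL)]
          rw [haff i hiM x ⟨h1, h2.le⟩]; ring
        · intro j hj hne
          apply Set.indicator_of_notMem
          rw [Set.mem_Ico]
          push_neg
          intro hj1
          by_contra hj2
          push_neg at hj2
          -- j·h ≤ x < (j+1)·h and i·h ≤ x < (i+1)·h force i = j
          apply hne
          have hji : (j : ℝ) < i + 1 := by
            by_contra hc'
            push_neg at hc'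
            have : ((i : ℝ) + 1) * h ≤ (j : ℝ) * h := by nlinarith
            linarith
          have hij : (i : ℝ) < j + 1 := by
            by_contra hc'
            push_neg at hc'
            have : ((j : ℝ) + 1) * h ≤ (i : ℝ) * h := by nlinarith
            linarith
          have : j < i + 1 := by exact_mod_cast hji
          have : i < j + 1 := by exact_mod_cast hij
          omega
    · rw [hu0 x hx0]
      have hzero : ∀ i ∈ Finset.range M,
          Set.indicator (Set.Ico ((i : ℝ) * h) (((i : ℝ) + 1) * h))
            (fun y => u ((i : ℝ) * h) + a i * (y - (i : ℝ) * h)) x = 0 := by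
        intro i hi
        apply Set.indicator_of_notMem
        intro hmem
        apply hx0
        rw [Set.mem_Ico] at hmem
        constructor
        · have : (0 : ℝ) ≤ (i : ℝ) * h := by positivity
          linarith [hmem.1]
        · have hiM : (i : ℝ) + 1 ≤ M := by
            have := Finset.mem_range.1 hi; exact_mod_cast this
          have : ((i : ℝ) + 1) * h ≤ (M : ℝ) * h := by nlinarith
          rw [hL]; linarith [hmem.2]
      rw [Finset.sum_congr rfl hzero]
      have : x ∉ ({L} : Set ℝ) := by
        intro hm'
        apply hx0
        rw [Set.mem_singleton_iff] at hm'
        rw [hm']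
        exact ⟨hL0.le, le_refl L⟩
      rw [Set.indicator_of_notMem this]
      simp
  rw [hu]
  apply Measurable.add
  · apply Finset.measurable_sum
    intro i _
    exact (measurable_const.add ((measurable_id.sub measurable_const).const_mul _)).indicator
      measurableSet_Ico
  · exact measurable_const.indicator (measurableSet_singleton L)

set_option maxHeartbeats 1000000 in
theorem discrete_energy_coercive_1d
    (ζ Cω : ℝ) (hζ : 0 < ζ) (hCω : 0 < Cω)
    (m Nbar M : ℕ) (hm : 1 ≤ m) (hmN : m ≤ Nbar) (hM : 1 ≤ M)
    (h : ℝ) (hh : 0 < h)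
    (δ hbar L : ℝ) (hδ : δ = m * h) (hhbar : hbar = δ / Nbar) (hL : L = M * h)
    (c : ℤ → ℝ)
    (hc : ∀ k : ℤ, 1 ≤ |k| → |k| ≤ (Nbar : ℤ) →
      c k = (Int.sign k : ℝ) * (2 * (|k| : ℝ) - 1) * hbar / 2)
    (ω : ℤ → ℝ)
    (hω : ∀ k : ℤ, 1 ≤ |k| → |k| ≤ (Nbar : ℤ) → Cω * δ ≤ ω k)
    (u : ℝ → ℝ) (a : ℕ → ℝ)
    (hu0 : ∀ x : ℝ, x ∉ Set.Icc (0 : ℝ) L → u x = 0)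
    (haff : ∀ i : ℕ, i < M → ∀ x ∈ Set.Icc ((i : ℝ) * h) (((i : ℝ) + 1) * h),
      u x = u ((i : ℝ) * h) + a i * (x - (i : ℝ) * h)) :
    (ζ * Cω / (8 * (Nbar : ℝ) ^ 2)) * ∑ i ∈ Finset.range M, (a i) ^ 2 * h ≤
      ∫ x in (0 : ℝ)..L,
        (ζ / δ ^ 3) *
          ∑ k ∈ (Finset.Icc (-(Nbar : ℤ)) (Nbar : ℤ)).filter (fun k => k ≠ 0),
            (u (x + c k) - u x) ^ 2 * ω k := by
  have hN1 : 1 ≤ Nbar := hm.trans hmN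
  have hN0 : (0 : ℝ) < Nbar := by exact_mod_cast Nat.lt_of_lt_of_le Nat.zero_lt_one hN1
  have hm0 : (1 : ℝ) ≤ m := by exact_mod_cast hm
  have hmNr : (m : ℝ) ≤ Nbar := by exact_mod_cast hmN
  have hδ0 : 0 < δ := by rw [hδ]; nlinarith
  have hbar0 : 0 < hbar := by rw [hhbar]; positivity
  have hL0 : 0 < L := by
    have h1M : (1:ℝ) ≤ M := by exact_mod_cast hM
    rw [hL]; nlinarith
  set s : ℝ := hbar / 2 with hs_def
  have hs0 : 0 < s := by positivity
  have hsh : s ≤ h / 2 := by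
    have : hbar ≤ h := by
      rw [hhbar, hδ, div_le_iff₀ hN0]; nlinarith
    simp only [hs_def]; linarith
  have hsδ : δ = 2 * (Nbar : ℝ) * s := by
    simp only [hs_def]; rw [hhbar]; field_simp
  -- the quadrature index set
  set S : Finset ℤ := (Finset.Icc (-(Nbar : ℤ)) (Nbar : ℤ)).filter (fun k => k ≠ 0) with hS
  have hmemS : ∀ k ∈ S, 1 ≤ |k| ∧ |k| ≤ (Nbar : ℤ) := by
    intro k hk
    rw [hS, Finset.mem_filter, Finset.mem_Icc] at hk
    exact ⟨Int.one_le_abs hk.2, abs_le.2 hk.1⟩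
  have h1S : (1 : ℤ) ∈ S := by
    rw [hS, Finset.mem_filter, Finset.mem_Icc]
    have : (1 : ℤ) ≤ (Nbar : ℤ) := by exact_mod_cast hN1
    refine ⟨⟨by omega, this⟩, by norm_num⟩
  have hc1 : c 1 = s := by
    have := hc 1 (by norm_num) (by exact_mod_cast hN1)
    rw [this, hs_def]; norm_num
  have hω1 : Cω * δ ≤ ω 1 := hω 1 (by norm_num) (by exact_mod_cast hN1)
  have humeas : Measurable u := aux_umeas M h hh L hL hL0 u a hu0 haff
  -- u is bounded
  obtain ⟨C, hC0, hCb⟩ : ∃ C, 0 ≤ C ∧ ∀ x, |u x| ≤ C := by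
    refine ⟨∑ i ∈ Finset.range M, (|u ((i : ℝ) * h)| + |a i| * h), by positivity, ?_⟩
    intro x
    by_cases hx : x ∈ Set.Icc (0 : ℝ) L
    · obtain ⟨i, hiM, hxi⟩ := aux_mem_elt M hM h hh x hx.1 (hL ▸ hx.2)
      calc |u x| = |u ((i : ℝ) * h) + a i * (x - (i : ℝ) * h)| := by
            rw [haff i hiM x hxi]
        _ ≤ |u ((i : ℝ) * h)| + |a i| * |x - (i : ℝ) * h| := by
            refine (abs_add_le _ _).trans ?_
            rw [abs_mul]
        _ ≤ |u ((i : ℝ) * h)| + |a i| * h := by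
            have h1 : |x - (i : ℝ) * h| ≤ h := by
              rw [abs_le]
              constructor
              · linarith [hxi.1]
              · have := hxi.2; nlinarith
            nlinarith [abs_nonneg (a i)]
        _ ≤ ∑ i ∈ Finset.range M, (|u ((i : ℝ) * h)| + |a i| * h) := by
            apply Finset.single_le_sum (f := fun j : ℕ => |u ((j : ℝ) * h)| + |a j| * h)
              (fun j _ => by positivity) (Finset.mem_range.2 hiM)
    · rw [hu0 x hx]; simp; positivity
  -- the two integrands
  set F : ℝ → ℝ := fun x => (ζ / δ ^ 3) * ∑ k ∈ S, (u (x + c k) - u x) ^ 2 * ω k with hF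
  set G : ℝ → ℝ := fun x => (ζ * Cω / δ ^ 2) * (u (x + s) - u x) ^ 2 with hG
  have hGnn : ∀ x, 0 ≤ G x := fun x => by rw [hG]; positivity
  -- integrability
  have hFmeas : Measurable F := by
    apply Measurable.const_mul
    apply Finset.measurable_sum
    intro k _
    exact (((humeas.comp (measurable_id.add_const (c k))).sub humeas).pow_const 2).mul_const _
  have hGmeas : Measurable G := by
    apply Measurable.const_mul
    exact ((humeas.comp (measurable_id.add_const s)).sub humeas).pow_const 2
  have hdiff : ∀ (x t : ℝ), (u (x + t) - u x) ^ 2 ≤ (2 * C) ^ 2 := by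
    intro x t
    have h1 : |u (x + t) - u x| ≤ 2 * C := by
      calc |u (x + t) - u x| ≤ |u (x + t)| + |u x| := abs_sub _ _
        _ ≤ 2 * C := by linarith [hCb (x + t), hCb x]
    calc (u (x + t) - u x) ^ 2 = |u (x + t) - u x| ^ 2 := (sq_abs _).symm
      _ ≤ (2 * C) ^ 2 := by nlinarith [abs_nonneg (u (x + t) - u x)]
  have hωnn : ∀ k ∈ S, 0 ≤ ω k := by
    intro k hk
    have := hω k (hmemS k hk).1 (hmemS k hk).2
    nlinarith
  have hFbd : ∀ x, ‖F x‖ ≤ (ζ / δ ^ 3) * ∑ k ∈ S, (2 * C) ^ 2 * ω k := by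
    intro x
    have hFnn : 0 ≤ F x := by
      rw [hF]
      apply mul_nonneg (by positivity)
      exact Finset.sum_nonneg fun k hk => mul_nonneg (sq_nonneg _) (hωnn k hk)
    rw [Real.norm_eq_abs, abs_of_nonneg hFnn, hF]
    apply mul_le_mul_of_nonneg_left _ (by positivity)
    exact Finset.sum_le_sum fun k hk =>
      mul_le_mul_of_nonneg_right (hdiff x (c k)) (hωnn k hk)
  have hGbd : ∀ x, ‖G x‖ ≤ (ζ * Cω / δ ^ 2) * (2 * C) ^ 2 := by
    intro x
    rw [Real.norm_eq_abs, abs_of_nonneg (hGnn x), hG]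
    exact mul_le_mul_of_nonneg_left (hdiff x s) (by positivity)
  have hFint : ∀ p q : ℝ, IntervalIntegrable F volume p q :=
    aux_intInt hFmeas _ hFbd
  have hGint : ∀ p q : ℝ, IntervalIntegrable G volume p q :=
    aux_intInt hGmeas _ hGbd
  -- pointwise : G ≤ F
  have hpt : ∀ x, G x ≤ F x := by
    intro x
    simp only [hG, hF]
    have step1 : (ζ * Cω / δ ^ 2) * (u (x + s) - u x) ^ 2
        = (ζ / δ ^ 3) * ((u (x + c 1) - u x) ^ 2 * (Cω * δ)) := by
      rw [hc1]; field_simp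
    rw [step1]
    apply mul_le_mul_of_nonneg_left _ (by positivity)
    calc (u (x + c 1) - u x) ^ 2 * (Cω * δ)
        ≤ (u (x + c 1) - u x) ^ 2 * ω 1 :=
          mul_le_mul_of_nonneg_left hω1 (sq_nonneg _)
      _ ≤ ∑ k ∈ S, (u (x + c k) - u x) ^ 2 * ω k :=
          Finset.single_le_sum (f := fun k => (u (x + c k) - u x) ^ 2 * ω k)
            (fun k hk => mul_nonneg (sq_nonneg _) (hωnn k hk)) h1S
  -- elementwise lower bound
  have helt : ∀ i : ℕ, i < M →
      (ζ * Cω / (8 * (Nbar : ℝ) ^ 2)) * ((a i) ^ 2 * h)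
        ≤ ∫ x in ((i : ℝ) * h)..(((i : ℝ) + 1) * h), G x := by
    intro i hiM
    have hle1 : (i : ℝ) * h ≤ ((i : ℝ) + 1) * h - s := by nlinarith
    have hle2 : ((i : ℝ) + 1) * h - s ≤ ((i : ℝ) + 1) * h := by linarith
    have hconst : ∫ x in ((i : ℝ) * h)..(((i : ℝ) + 1) * h - s), G x
        = (h - s) * ((ζ * Cω / δ ^ 2) * (a i * s) ^ 2) := by
      rw [intervalIntegral.integral_congr
        (g := fun _ => (ζ * Cω / δ ^ 2) * (a i * s) ^ 2) ?_]
      · rw [intervalIntegral.integral_const, smul_eq_mul]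
        ring_nf
      · intro x hx
        rw [Set.uIcc_of_le hle1, Set.mem_Icc] at hx
        have hx1 : x ∈ Set.Icc ((i : ℝ) * h) (((i : ℝ) + 1) * h) :=
          ⟨hx.1, by linarith [hx.2]⟩
        have hx2 : x + s ∈ Set.Icc ((i : ℝ) * h) (((i : ℝ) + 1) * h) :=
          ⟨by linarith [hx.1], by linarith [hx.2]⟩
        show G x = _
        simp only [hG]
        rw [haff i hiM x hx1, haff i hiM (x + s) hx2]
        ring_nf
    have hmono : ∫ x in ((i : ℝ) * h)..(((i : ℝ) + 1) * h - s), G x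
        ≤ ∫ x in ((i : ℝ) * h)..(((i : ℝ) + 1) * h), G x := by
      apply intervalIntegral.integral_mono_interval (le_refl _) hle1 hle2
        (Filter.Eventually.of_forall hGnn) (hGint _ _)
    refine le_trans ?_ (hconst ▸ hmono)
    -- arithmetic: (ζCω/(8N²)) a² h ≤ (h−s)(ζCω/δ²)(a s)²
    have key : (ζ * Cω / (8 * (Nbar : ℝ) ^ 2)) * ((a i) ^ 2 * h)
        = (h / 2) * ((ζ * Cω / δ ^ 2) * (a i * s) ^ 2) := by
      rw [hsδ]
      have hs' : s ≠ 0 := ne_of_gt hs0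
      have hN' : (Nbar : ℝ) ≠ 0 := ne_of_gt hN0
      field_simp
      ring
    rw [key]
    have hfac : 0 ≤ (ζ * Cω / δ ^ 2) * (a i * s) ^ 2 := by positivity
    nlinarith [hfac, hsh]
  -- assemble
  have hsplit : ∑ i ∈ Finset.range M, ∫ x in ((i : ℝ) * h)..(((i : ℝ) + 1) * h), G x
      = ∫ x in (0 : ℝ)..L, G x := by
    have := intervalIntegral.sum_integral_adjacent_intervals
      (f := G) (μ := volume) (a := fun i => (i : ℝ) * h) (n := M)
      (fun k _ => hGint _ _)
    simp only [Nat.cast_zero, zero_mul] at this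
    rw [hL, ← this]
    apply Finset.sum_congr rfl
    intro i _
    norm_num [Nat.cast_add]
  calc (ζ * Cω / (8 * (Nbar : ℝ) ^ 2)) * ∑ i ∈ Finset.range M, (a i) ^ 2 * h
      = ∑ i ∈ Finset.range M, (ζ * Cω / (8 * (Nbar : ℝ) ^ 2)) * ((a i) ^ 2 * h) := by
        rw [Finset.mul_sum]
    _ ≤ ∑ i ∈ Finset.range M, ∫ x in ((i : ℝ) * h)..(((i : ℝ) + 1) * h), G x :=
        Finset.sum_le_sum fun i hi => helt i (Finset.mem_range.1 hi)
    _ = ∫ x in (0 : ℝ)..L, G x := hsplit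
    _ ≤ ∫ x in (0 : ℝ)..L, F x :=
        intervalIntegral.integral_mono_on hL0.le (hGint 0 L) (hFint 0 L)
          (fun x _ => hpt x)
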